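/- Let n be odd and Γ = Cay(D_{2n}, S) a Cayley digraph with A = Aut(Γ). If the vertex stabilizer A₁ of the identity vertex satisfies gcd(|A₁|, n) = 1, then Γ is a CI-digraph. -/

import Mathlib

/-- The Cayley digraph relation of `G` with connection set `S`:
there is an arc from `x` to `y` iff `y = s * x` for some `s ∈ S`. -/
def cayRel {G : Type*} [Group G] (S : Set G) : G → G → Prop :=
  fun x y => y * x⁻¹ ∈ S

/-- The automorphism group of the Cayley digraph `Cay(G,S)`,
as a subgroup of the permutations of the vertex set `G`. -/
def cayAut {G : Type*} [Group G] (S : Set G) : Subgroup (Equiv.Perm G) where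
  carrier := {f | ∀ x y, cayRel S (f x) (f y) ↔ cayRel S x y}
  one_mem' := by intro x y; rfl
  mul_mem' := by
    intro f g hf hg x y
    rw [Equiv.Perm.mul_apply, Equiv.Perm.mul_apply, hf, hg]
  inv_mem' := by
    intro f hf x y
    simpa [Equiv.Perm.inv_def] using (hf (f⁻¹ x) (f⁻¹ y)).symm

/-- `Cay(G,S)` is a CI-digraph: any isomorphic Cayley digraph `Cay(G,T)`
is Cayley isomorphic to it. -/
def IsCIDigraph {G : Type*} [Group G] (S : Set G) : Prop :=
  ∀ T : Set G, (1 : G) ∉ T → Nonempty (cayRel S ≃r cayRel T) →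
    ∃ α : G ≃* G, α '' S = T

/-- `G` has the `m`-DCI property: every Cayley digraph of `G` of out-valency `m`
is a CI-digraph. -/
def HasDCI (G : Type*) [Group G] (m : ℕ) : Prop :=
  ∀ S : Set G, (1 : G) ∉ S → S.ncard = m → IsCIDigraph S

/-- The right regular representation `R(G)` as a subgroup of `Perm G`. -/
def rightReg (G : Type*) [Group G] : Subgroup (Equiv.Perm G) where
  carrier := Set.range fun g : G => Equiv.mulRight g
  one_mem' := ⟨1, by ext x; simp⟩
  mul_mem' := by
    rintro _ _ ⟨g, rfl⟩ ⟨h, rfl⟩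
    exact ⟨h * g, by ext x; simp [mul_assoc]⟩
  inv_mem' := by
    rintro _ ⟨g, rfl⟩
    exact ⟨g⁻¹, by ext x; simp [Equiv.Perm.inv_def]⟩

/-- A subgroup of permutations of `V` is regular if for all `x y : V` there is a
unique element sending `x` to `y`. -/
def IsRegularSubgroup {V : Type*} (H : Subgroup (Equiv.Perm V)) : Prop :=
  ∀ x y : V, ∃! h : H, (h : Equiv.Perm V) x = y


section Helpers

open DihedralGroup Subgroup Pointwise

open Subgroup Pointwise

variable {G : Type*} [Group G]

lemma conj_mem_iff (g x : G) (H : Subgroup G) :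
    x ∈ Subgroup.map (MulAut.conj g).toMonoidHom H ↔ g⁻¹ * x * g ∈ H := by
  constructor
  · rintro ⟨y, hy, rfl⟩
    simpa [MulAut.conj_apply, mul_assoc] using hy
  · intro hx
    exact ⟨g⁻¹ * x * g, hx, by simp [MulAut.conj_apply, mul_assoc]⟩

lemma map_conj_map_conj (g h : G) (H : Subgroup G) :
    Subgroup.map (MulAut.conj g).toMonoidHom (Subgroup.map (MulAut.conj h).toMonoidHom H)
      = Subgroup.map (MulAut.conj (g * h)).toMonoidHom H := by
  ext x
  simp [conj_mem_iff, mul_assoc]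

lemma card_map_conj (g : G) (H : Subgroup G) :
    Nat.card (Subgroup.map (MulAut.conj g).toMonoidHom H) = Nat.card H :=
  Nat.card_congr (H.equivMapOfInjective _ (MulAut.conj g).injective).symm.toEquiv

lemma index_map_conj (g : G) (H : Subgroup G) :
    (Subgroup.map (MulAut.conj g).toMonoidHom H).index = H.index := by
  refine Subgroup.index_map_eq H (MulAut.conj g).surjective ?_
  rw [(MulAut.conj g).toMonoidHom.ker_eq_bot_iff.mpr (MulAut.conj g).injective]
  exact bot_le

lemma smul_eq_map_conj (g : G) (P : Subgroup G) :
    MulAut.conj g • P = Subgroup.map (MulAut.conj g).toMonoidHom P := by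
  ext x
  rw [conj_mem_iff, Subgroup.mem_pointwise_smul_iff_inv_smul_mem]
  constructor
  · intro h; simpa [MulAut.smul_def, mul_assoc] using h
  · intro h; simpa [MulAut.smul_def, mul_assoc] using h

lemma map_conj_of_normal (g : G) (P : Subgroup G) [hP : P.Normal] :
    Subgroup.map (MulAut.conj g).toMonoidHom P = P := by
  ext x
  rw [conj_mem_iff]
  constructor
  · intro hx
    have := hP.conj_mem _ hx g
    simpa [mul_assoc] using this
  · intro hx
    have := hP.conj_mem _ hx g⁻¹
    simpa [mul_assoc] using this

lemma map_map_conj_comm {G' : Type*} [Group G'] (φ : G →* G') (g : G) (L : Subgroup G) :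
    (Subgroup.map (MulAut.conj g).toMonoidHom L).map φ
      = Subgroup.map (MulAut.conj (φ g)).toMonoidHom (L.map φ) := by
  rw [Subgroup.map_map, Subgroup.map_map]
  congr 1
  ext x
  simp [MulAut.conj_apply]

lemma le_normalizer_of_comm {L P : Subgroup G} [hL : IsMulCommutative L] (h : P ≤ L) :
    L ≤ Subgroup.normalizer (P : Set G) := by
  intro x hx
  rw [Subgroup.mem_normalizer_iff]
  intro y
  constructor
  · intro hy
    have hc : x * y = y * x := Subgroup.mul_comm_of_mem_isMulCommutative L hx (h hy)
    rw [hc]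
    simpa using hy
  · intro hy
    have hyL : y = x⁻¹ * (x * y * x⁻¹) * x := by group
    have hc : x⁻¹ * (x * y * x⁻¹) = (x * y * x⁻¹) * x⁻¹ :=
      Subgroup.mul_comm_of_mem_isMulCommutative L (inv_mem hx) (h hy)
    rw [hyL, hc]
    simpa using hy

lemma exists_sylow_le [Finite G] {p : ℕ} [Fact p.Prime]
    (L : Subgroup G) (hdvd : ¬ p ∣ L.index) :
    ∃ P : Subgroup G, P ≤ L ∧ IsPGroup p P ∧
      Nat.card P = p ^ (Nat.card G).factorization p := by
  obtain ⟨Q⟩ : Nonempty (Sylow p L) := inferInstance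
  refine ⟨(Q : Subgroup L).map L.subtype, Subgroup.map_subtype_le _, Q.2.map _, ?_⟩
  have h1 : Nat.card ((Q : Subgroup L).map L.subtype) = Nat.card Q :=
    Nat.card_congr ((Q : Subgroup L).equivMapOfInjective _ L.subtype_injective).symm.toEquiv
  rw [h1, Sylow.card_eq_multiplicity]
  congr 1
  have hGL : Nat.card G = Nat.card L * L.index := (Subgroup.card_mul_index L).symm
  have hL0 : Nat.card L ≠ 0 := Nat.card_pos.ne'
  have hI0 : L.index ≠ 0 := Subgroup.index_ne_zero_of_finite
  rw [hGL, Nat.factorization_mul hL0 hI0, Finsupp.add_apply,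
    Nat.factorization_eq_zero_of_not_dvd hdvd, add_zero]

lemma card_map_mk' [Finite G] (P L : Subgroup G) [P.Normal] (h : P ≤ L) :
    Nat.card (L.map (QuotientGroup.mk' P)) * Nat.card P = Nat.card L := by
  set φ := QuotientGroup.mk' P with hφ
  have hrange : (φ.comp L.subtype).range = L.map φ := by
    rw [MonoidHom.range_comp, Subgroup.range_subtype]
  have hker : (φ.comp L.subtype).ker = P.subgroupOf L := by
    rw [← MonoidHom.comap_ker, QuotientGroup.ker_mk']
    rfl
  have h1 : Nat.card L
      = Nat.card (L ⧸ (φ.comp L.subtype).ker) * Nat.card ((φ.comp L.subtype).ker) :=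
    Subgroup.card_eq_card_quotient_mul_card_subgroup _
  have h2 : Nat.card (L ⧸ (φ.comp L.subtype).ker) = Nat.card (L.map φ) := by
    rw [← hrange]
    exact Nat.card_congr (QuotientGroup.quotientKerEquivRange _).toEquiv
  have h3 : Nat.card ((φ.comp L.subtype).ker) = Nat.card P := by
    rw [hker]
    exact Nat.card_congr (Subgroup.subgroupOfEquivOfLe h).toEquiv
  rw [h1, h2, h3]

universe u

lemma hall_key : ∀ (c : ℕ) (G : Type u) [Group G] [Finite G] (H K : Subgroup G)
    [IsMulCommutative H] [IsMulCommutative K],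
    Nat.card H = Nat.card K →
    Nat.Coprime (Nat.card H) H.index →
    Nat.Coprime (Nat.card K) K.index →
    Nat.card G ≤ c →
    ∃ g : G, Subgroup.map (MulAut.conj g).toMonoidHom H = K := by
  intro c
  induction c with
  | zero =>
    intro G _ _ H K _ _ _ _ _ hc
    have := Nat.card_pos (α := G)
    omega
  | succ c ih =>
    intro G _ _ H K hcomH hcomK hcard hHcop hKcop hc
    haveI := hcomH; haveI := hcomK
    by_cases h1 : Nat.card H = 1
    · have hHbot : H = ⊥ := Subgroup.eq_bot_of_card_eq H h1
      have hKbot : K = ⊥ := Subgroup.eq_bot_of_card_eq K (hcard ▸ h1)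
      refine ⟨1, ?_⟩
      ext x
      simp [conj_mem_iff, hHbot, hKbot, Subgroup.mem_bot]
    · set p := (Nat.card H).minFac with hp_def
      have hp : p.Prime := Nat.minFac_prime h1
      haveI : Fact p.Prime := ⟨hp⟩
      have hpH : p ∣ Nat.card H := Nat.minFac_dvd _
      have hpK : p ∣ Nat.card K := hcard ▸ hpH
      have hpHind : ¬ p ∣ H.index := fun hd =>
        hp.ne_one (Nat.dvd_one.mp (hHcop ▸ Nat.dvd_gcd hpH hd))
      have hpKind : ¬ p ∣ K.index := fun hd =>
        hp.ne_one (Nat.dvd_one.mp (hKcop ▸ Nat.dvd_gcd hpK hd))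
      obtain ⟨PH, hPHle, hPHp, hPHcard⟩ := exists_sylow_le (p := p) H hpHind
      obtain ⟨PK, hPKle, hPKp, hPKcard⟩ := exists_sylow_le (p := p) K hpKind
      obtain ⟨QH, hQH⟩ := hPHp.exists_le_sylow
      obtain ⟨QK, hQK⟩ := hPKp.exists_le_sylow
      have hPHQ : PH = (QH : Subgroup G) :=
        Subgroup.eq_of_le_of_card_ge hQH (by rw [hPHcard, Sylow.card_eq_multiplicity])
      have hPKQ : PK = (QK : Subgroup G) :=
        Subgroup.eq_of_le_of_card_ge hQK (by rw [hPKcard, Sylow.card_eq_multiplicity])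
      obtain ⟨g, hg⟩ := MulAction.exists_smul_eq G QH QK
      have hgsub : Subgroup.map (MulAut.conj g).toMonoidHom PH = (QK : Subgroup G) := by
        rw [hPHQ, ← smul_eq_map_conj, ← Sylow.coe_subgroup_smul, hg]
      set H' := Subgroup.map (MulAut.conj g).toMonoidHom H with hH'def
      set P := (QK : Subgroup G) with hPdef
      have hPH' : P ≤ H' := by
        rw [← hgsub]
        exact Subgroup.map_mono hPHle
      have hPK' : P ≤ K := hPKQ ▸ hPKle
      haveI : IsMulCommutative H' := Subgroup.map_isMulCommutative (H := H) _
      have hcardH' : Nat.card H' = Nat.card H := card_map_conj g H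
      have hindH' : H'.index = H.index := index_map_conj g H
      set N := Subgroup.normalizer (P : Set G) with hNdef
      have hH'N : H' ≤ N := le_normalizer_of_comm hPH'
      have hKN : K ≤ N := le_normalizer_of_comm hPK'
      by_cases hN : N = ⊤
      · -- P is normal in G; pass to the quotient
        haveI hPnorm : P.Normal := Subgroup.normalizer_eq_top_iff.mp hN
        have hPcard : Nat.card P = p ^ (Nat.card G).factorization p := by
          rw [hPdef, Sylow.card_eq_multiplicity]
        have hfac : 0 < (Nat.card G).factorization p :=
          hp.factorization_pos_of_dvd Nat.card_pos.ne'
            (hpH.trans (Subgroup.card_subgroup_dvd_card H))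
        have hP1 : 1 < Nat.card P := by
          rw [hPcard]
          exact Nat.one_lt_pow hfac.ne' hp.one_lt
        set φ := QuotientGroup.mk' P with hφdef
        have hkerφ : φ.ker = P := QuotientGroup.ker_mk' P
        have hφsurj : Function.Surjective φ := QuotientGroup.mk'_surjective P
        set Hq := H'.map φ with hHqdef
        set Kq := K.map φ with hKqdef
        haveI : IsMulCommutative Hq := Subgroup.map_isMulCommutative (H := H') φ
        haveI : IsMulCommutative Kq := Subgroup.map_isMulCommutative (H := K) φ
        have hcardHq : Nat.card Hq * Nat.card P = Nat.card H' :=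
          card_map_mk' P H' hPH'
        have hcardKq : Nat.card Kq * Nat.card P = Nat.card K :=
          card_map_mk' P K hPK'
        have hcardq : Nat.card Hq = Nat.card Kq := by
          have h0 : 0 < Nat.card P := Nat.card_pos
          have : Nat.card Hq * Nat.card P = Nat.card Kq * Nat.card P := by
            rw [hcardHq, hcardKq, hcardH', hcard]
          exact Nat.eq_of_mul_eq_mul_right h0 this
        have hindHq : Hq.index = H'.index :=
          Subgroup.index_map_eq H' hφsurj (hkerφ.le.trans hPH')
        have hindKq : Kq.index = K.index :=
          Subgroup.index_map_eq K hφsurj (hkerφ.le.trans hPK')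
        have hHqcop : Nat.Coprime (Nat.card Hq) Hq.index := by
          rw [hindHq, hindH']
          exact Nat.Coprime.coprime_dvd_left ⟨Nat.card P, (hcardHq.trans hcardH').symm⟩ hHcop
        have hKqcop : Nat.Coprime (Nat.card Kq) Kq.index := by
          rw [hindKq]
          exact Nat.Coprime.coprime_dvd_left ⟨Nat.card P, hcardKq.symm⟩ hKcop
        have hGq : Nat.card (G ⧸ P) * Nat.card P = Nat.card G :=
          (Subgroup.card_eq_card_quotient_mul_card_subgroup P).symm
        have hfuel : Nat.card (G ⧸ P) ≤ c := by
          have h0 : 0 < Nat.card (G ⧸ P) := Nat.card_pos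
          nlinarith [hc, hGq, hP1, h0]
        obtain ⟨gq, hgq⟩ := ih (G ⧸ P) Hq Kq hcardq hHqcop hKqcop hfuel
        obtain ⟨g₂, rfl⟩ := hφsurj gq
        refine ⟨g₂ * g, ?_⟩
        rw [← map_conj_map_conj, ← hH'def]
        have hmapeq : (Subgroup.map (MulAut.conj g₂).toMonoidHom H').map φ = Kq := by
          rw [map_map_conj_comm, ← hHqdef, hgq]
        have h2 := congrArg (Subgroup.comap φ) hmapeq
        rw [hKqdef, Subgroup.comap_map_eq, Subgroup.comap_map_eq, hkerφ,
          sup_eq_left.mpr hPK'] at h2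
        rwa [sup_eq_left.mpr ?_] at h2
        calc P = Subgroup.map (MulAut.conj g₂).toMonoidHom P := (map_conj_of_normal g₂ P).symm
          _ ≤ _ := Subgroup.map_mono hPH'
      · -- the normalizer is proper; induct inside it
        have hNlt : Nat.card N < Nat.card G := by
          have hle : Nat.card N ≤ Nat.card G := Subgroup.card_le_card_group N
          rcases lt_or_eq_of_le hle with h | h
          · exact h
          · exact absurd (Subgroup.eq_top_of_card_eq N h) hN
        set H'' := H'.subgroupOf N with hH''def
        set K'' := K.subgroupOf N with hK''def
        haveI : IsMulCommutative H'' := by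
          rw [hH''def]; infer_instance
        haveI : IsMulCommutative K'' := by
          rw [hK''def]; infer_instance
        have hcH'' : Nat.card H'' = Nat.card H' :=
          Nat.card_congr (Subgroup.subgroupOfEquivOfLe hH'N).toEquiv
        have hcK'' : Nat.card K'' = Nat.card K :=
          Nat.card_congr (Subgroup.subgroupOfEquivOfLe hKN).toEquiv
        have hiH'' : H''.index ∣ H'.index :=
          ⟨N.index, (Subgroup.relIndex_mul_index hH'N).symm⟩
        have hiK'' : K''.index ∣ K.index :=
          ⟨N.index, (Subgroup.relIndex_mul_index hKN).symm⟩
        have hH''cop : Nat.Coprime (Nat.card H'') H''.index := by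
          rw [hcH'', hcardH']
          exact Nat.Coprime.coprime_dvd_right (hindH' ▸ hiH'') hHcop
        have hK''cop : Nat.Coprime (Nat.card K'') K''.index := by
          rw [hcK'']
          exact Nat.Coprime.coprime_dvd_right hiK'' hKcop
        have hcard'' : Nat.card H'' = Nat.card K'' := by
          rw [hcH'', hcK'', hcardH', hcard]
        obtain ⟨x, hx⟩ := ih N H'' K'' hcard'' hH''cop hK''cop (by omega)
        refine ⟨(x : G) * g, ?_⟩
        rw [← map_conj_map_conj, ← hH'def]
        have h2 := congrArg (Subgroup.map N.subtype) hx
        rw [map_map_conj_comm, hH''def, hK''def, Subgroup.subgroupOf_map_subtype,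
          Subgroup.subgroupOf_map_subtype, inf_eq_left.mpr hH'N, inf_eq_left.mpr hKN] at h2
        exact h2

lemma card_map_mk'' (P L : Subgroup G) [Finite G] [P.Normal] (h : P ≤ L) : True := trivial

variable {n : ℕ} [NeZero n]

lemma r_inv (i : ZMod n) : (r i : DihedralGroup n)⁻¹ = r (-i) :=
  inv_eq_of_mul_eq_one_right (by rw [r_mul_r, add_neg_cancel, one_def])

lemma sr_inv (i : ZMod n) : (sr i : DihedralGroup n)⁻¹ = sr i :=
  inv_eq_of_mul_eq_one_right (sr_mul_self i)

lemma r_one_zpow (k : ℤ) : (r 1 : DihedralGroup n) ^ k = r (k : ZMod n) := by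
  cases k with
  | ofNat k =>
    rw [Int.ofNat_eq_natCast, zpow_natCast, r_one_pow]
    norm_num
  | negSucc k =>
    rw [zpow_negSucc, r_one_pow, r_inv]
    norm_num

lemma mem_zpowers_r_one (x : DihedralGroup n) :
    x ∈ Subgroup.zpowers (r 1) ↔ ∃ i : ZMod n, x = r i := by
  rw [Subgroup.mem_zpowers_iff]
  constructor
  · rintro ⟨k, rfl⟩
    exact ⟨k, _root_.r_one_zpow k⟩
  · rintro ⟨i, rfl⟩
    refine ⟨(i.val : ℤ), ?_⟩
    rw [_root_.r_one_zpow]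
    norm_cast
    rw [ZMod.natCast_val, ZMod.cast_id]

/-- The right regular representation as a monoid hom `g ↦ mulRight g⁻¹`. -/
def rr (n : ℕ) : DihedralGroup n →* Equiv.Perm (DihedralGroup n) where
  toFun g := Equiv.mulRight g⁻¹
  map_one' := by ext x; simp
  map_mul' g h := by ext x; simp [mul_assoc]

lemma rr_apply (g x : DihedralGroup n) : rr n g x = x * g⁻¹ := rfl

lemma rr_injective : Function.Injective (rr n) := by
  intro a b hab
  have := congrArg (fun f : Equiv.Perm (DihedralGroup n) => f 1) hab
  simpa [rr_apply] using this

lemma mulRight_mul (a b : DihedralGroup n) :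
    Equiv.mulRight a * Equiv.mulRight b = Equiv.mulRight (b * a) := by
  ext x
  simp [mul_assoc]

lemma mulRight_inv (a : DihedralGroup n) :
    (Equiv.mulRight a : Equiv.Perm (DihedralGroup n))⁻¹ = Equiv.mulRight a⁻¹ :=
  inv_eq_of_mul_eq_one_right (by rw [mulRight_mul]; simp)

lemma mem_Cp_iff (w : Equiv.Perm (DihedralGroup n)) :
    w ∈ Subgroup.zpowers (rr n (r 1)) ↔ ∃ j : ZMod n, w = Equiv.mulRight (r j) := by
  rw [← MonoidHom.map_zpowers, Subgroup.mem_map]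
  constructor
  · rintro ⟨x, hx, rfl⟩
    obtain ⟨i, rfl⟩ := (mem_zpowers_r_one x).mp hx
    exact ⟨-i, by simp [rr, r_inv]⟩
  · rintro ⟨j, rfl⟩
    refine ⟨r (-j), (mem_zpowers_r_one _).mpr ⟨-j, rfl⟩, ?_⟩
    simp [rr, r_inv]

lemma mem_rightReg_iff {G : Type*} [Group G] {w : Equiv.Perm G} :
    w ∈ rightReg G ↔ ∃ g : G, Equiv.mulRight g = w := Iff.rfl

lemma Cp_le_rightReg : Subgroup.zpowers (rr n (r 1)) ≤ rightReg (DihedralGroup n) := by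
  rw [Subgroup.zpowers_le]
  exact ⟨(r 1)⁻¹, rfl⟩

lemma conj_rightReg_eq (h : Equiv.Perm (DihedralGroup n))
    (hCp : Subgroup.map (MulAut.conj h⁻¹).toMonoidHom (Subgroup.zpowers (rr n (r 1)))
      = Subgroup.zpowers (rr n (r 1))) :
    Subgroup.map (MulAut.conj h⁻¹).toMonoidHom (rightReg (DihedralGroup n))
      = rightReg (DihedralGroup n) := by
  set Cp := Subgroup.zpowers (rr n (r 1)) with hCpdef
  set R := rightReg (DihedralGroup n) with hRdef
  have hCpR : Cp ≤ R := Cp_le_rightReg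
  have hCpmap : Cp ≤ Subgroup.map (MulAut.conj h⁻¹).toMonoidHom R := by
    conv_lhs => rw [← hCp]
    exact Subgroup.map_mono hCpR
  have hsemi : ∀ k' ∈ Subgroup.map (MulAut.conj h⁻¹).toMonoidHom R,
      k' (1 : DihedralGroup n) = 1 → k' = 1 := by
    intro k' hk' hfix
    rw [conj_mem_iff, inv_inv] at hk'
    obtain ⟨y, hy⟩ := mem_rightReg_iff.mp hk'
    have hkeq : k' = h⁻¹ * Equiv.mulRight y * h := by rw [hy]; group
    have h1 : k' 1 = h⁻¹ (h 1 * y) := by rw [hkeq]; simp [Equiv.Perm.mul_apply]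
    have h2 : h 1 * y = h 1 := by
      have := congrArg h (h1 ▸ hfix)
      simpa using this
    have h3 : y = 1 := mul_left_cancel (a := h 1) (by rw [mul_one]; exact h2)
    rw [hkeq, h3]
    ext x
    simp
  refine Subgroup.eq_of_le_of_card_ge ?_ (le_of_eq (card_map_conj h⁻¹ R).symm)
  intro k hk
  have hk' := hk
  rw [conj_mem_iff, inv_inv] at hk'
  obtain ⟨y, hy⟩ := mem_rightReg_iff.mp hk'
  have hkeq : k = h⁻¹ * Equiv.mulRight y * h := by rw [hy]; group
  cases y with
  | r i =>
    have hmem : k ∈ Cp := by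
      rw [← hCp, conj_mem_iff, inv_inv, ← hy]
      exact (mem_Cp_iff _).mpr ⟨i, rfl⟩
    exact hCpR hmem
  | sr i =>
    have hww : Equiv.mulRight (sr i) * Equiv.mulRight (sr i)
        = (1 : Equiv.Perm (DihedralGroup n)) := by
      rw [mulRight_mul, sr_mul_self]
      ext x
      simp
    have hk2 : k * k = 1 := by
      calc k * k = h⁻¹ * (Equiv.mulRight (sr i) * Equiv.mulRight (sr i)) * h := by
            rw [hkeq]; group
        _ = 1 := by rw [hww]; group
    have hkinv : k⁻¹ = k := inv_eq_of_mul_eq_one_right hk2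
    have hcinv : ∀ c ∈ Cp, k * c * k⁻¹ = c⁻¹ := by
      intro c hc
      have hc2 : c ∈ Subgroup.map (MulAut.conj h⁻¹).toMonoidHom Cp := by rw [hCp]; exact hc
      rw [conj_mem_iff, inv_inv] at hc2
      obtain ⟨j₀, hj₀⟩ := (mem_Cp_iff _).mp hc2
      have hc' : c = h⁻¹ * Equiv.mulRight (r j₀) * h := by
        rw [← hj₀]; group
      have hidx : i - j₀ - i = -j₀ := by ring
      have hmid : Equiv.mulRight (sr i) * Equiv.mulRight (r j₀) * (Equiv.mulRight (sr i))⁻¹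
          = Equiv.mulRight (r (-j₀)) := by
        rw [mulRight_inv, sr_inv, mulRight_mul, r_mul_sr, mulRight_mul, sr_mul_sr, hidx]
      have hcinv' : c⁻¹ = h⁻¹ * Equiv.mulRight (r (-j₀)) * h := by
        rw [hc', ← r_inv, ← mulRight_inv]
        group
      rw [hcinv', hkeq, hc']
      calc h⁻¹ * Equiv.mulRight (sr i) * h * (h⁻¹ * Equiv.mulRight (r j₀) * h) *
            (h⁻¹ * Equiv.mulRight (sr i) * h)⁻¹
          = h⁻¹ * (Equiv.mulRight (sr i) * Equiv.mulRight (r j₀) *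
              (Equiv.mulRight (sr i))⁻¹) * h := by group
        _ = h⁻¹ * Equiv.mulRight (r (-j₀)) * h := by rw [hmid]
    rcases hx1 : k 1 with j | j
    · -- k 1 = r j : then k is the rotation mulRight (r j)
      have hcpk : Equiv.mulRight (r j) ∈ Subgroup.map (MulAut.conj h⁻¹).toMonoidHom R :=
        hCpmap ((mem_Cp_iff _).mpr ⟨j, rfl⟩)
      have hk'' : (Equiv.mulRight (r j))⁻¹ * k ∈ Subgroup.map (MulAut.conj h⁻¹).toMonoidHom R :=
        mul_mem (inv_mem hcpk) hk
      have hfix : ((Equiv.mulRight (r j))⁻¹ * k) 1 = 1 := by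
        rw [Equiv.Perm.mul_apply, hx1, mulRight_inv, r_inv]
        show (r j : DihedralGroup n) * r (-j) = 1
        rw [r_mul_r, add_neg_cancel, one_def]
      have h1 := hsemi _ hk'' hfix
      have h2 : k = Equiv.mulRight (r j) := by
        have := inv_mul_eq_one.mp h1
        exact this.symm
      rw [h2]
      exact ⟨r j, rfl⟩
    · -- k 1 = sr j : then k is mulRight (sr j)
      have hvals1 : ∀ t : ZMod n, k (r t) = sr (j - t) := by
        intro t
        have hmem : Equiv.mulRight (r t) ∈ Cp := (mem_Cp_iff _).mpr ⟨t, rfl⟩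
        have h1 := hcinv _ hmem
        have h2 : k * Equiv.mulRight (r t) = (Equiv.mulRight (r t))⁻¹ * k := by
          have h3 := congrArg (· * k) h1
          simpa [mul_assoc, hkinv, hk2] using h3
        have h4 := congrArg (fun f : Equiv.Perm (DihedralGroup n) => f 1) h2
        simp only [Equiv.Perm.mul_apply] at h4
        rw [mulRight_inv, r_inv] at h4
        have h5 : (Equiv.mulRight (r t)) (1 : DihedralGroup n) = r t := by
          show (1 : DihedralGroup n) * r t = r t
          rw [one_mul]
        rw [h5, hx1] at h4
        have h6 : (Equiv.mulRight (r (-t))) (sr j) = sr (j - t) := by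
          show (sr j : DihedralGroup n) * r (-t) = sr (j - t)
          rw [sr_mul_r, sub_eq_add_neg]
        rw [h6] at h4
        exact h4
      have hvals2 : ∀ t : ZMod n, k (sr t) = r (j - t) := by
        intro t
        have h1 : k (r (j - t)) = sr t := by
          rw [hvals1]
          congr 1
          ring
        have h2 : k (k (r (j - t))) = r (j - t) := by
          have := congrArg (fun f : Equiv.Perm (DihedralGroup n) => f (r (j - t))) hk2
          simpa [Equiv.Perm.mul_apply] using this
        rw [h1] at h2
        exact h2
      have hkeq2 : k = Equiv.mulRight (sr j) := by
        apply Equiv.ext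
        intro x
        cases x with
        | r t =>
          rw [hvals1]
          show _ = (r t : DihedralGroup n) * sr j
          rw [r_mul_sr]
        | sr t =>
          rw [hvals2]
          show _ = (sr t : DihedralGroup n) * sr j
          rw [sr_mul_sr]
      rw [hkeq2]
      exact ⟨sr j, rfl⟩

end Helpers

section FinalAssembly

open DihedralGroup Subgroup

lemma mem_cayAut {G : Type*} [Group G] {S : Set G} {w : Equiv.Perm G} :
    w ∈ cayAut S ↔ ∀ x y, cayRel S (w x) (w y) ↔ cayRel S x y := Iff.rfl

lemma mulRight_mem_cayAut {G : Type*} [Group G] (S : Set G) (g : G) :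
    Equiv.mulRight g ∈ cayAut S := by
  rw [mem_cayAut]
  intro x y
  show cayRel S (x * g) (y * g) ↔ cayRel S x y
  unfold cayRel
  simp [mul_inv_rev, mul_assoc]

lemma map_conj_self_mem {G : Type*} [Group G] {w : G} {H : Subgroup G} (hw : w ∈ H) :
    Subgroup.map (MulAut.conj w).toMonoidHom H = H := by
  ext x
  rw [conj_mem_iff]
  constructor
  · intro hx
    have := mul_mem (mul_mem hw hx) (inv_mem hw)
    simpa [mul_assoc] using this
  · intro hx
    exact mul_mem (mul_mem (inv_mem hw) hx) hw

/-- For `n` odd, if the stabilizer of the identity vertex in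
`Aut(Cay(D_{2n},S))` has order coprime to `n`, then `Cay(D_{2n},S)` is a
CI-digraph. -/
theorem stmt12 (n : ℕ) (hodd : Odd n) (S : Set (DihedralGroup n))
    (hS : (1 : DihedralGroup n) ∉ S)
    (hcop : Nat.Coprime
      (Nat.card {f : cayAut S // ((f : Equiv.Perm (DihedralGroup n)) 1 = 1)}) n) :
    IsCIDigraph S := by
  haveI : NeZero n := ⟨hodd.pos.ne'⟩
  intro T hT hne
  obtain ⟨e⟩ := hne
  classical
  set st := Nat.card {f : cayAut S // ((f : Equiv.Perm (DihedralGroup n)) 1 = 1)} with hstdef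
  set f : Equiv.Perm (DihedralGroup n) := e.toEquiv with hfdef
  have hf : ∀ x y, cayRel T (f x) (f y) ↔ cayRel S x y := fun x y => e.map_rel_iff
  set m : Equiv.Perm (DihedralGroup n) := rr n (r 1) with hmdef
  have hmA : m ∈ cayAut S := mulRight_mem_cayAut S ((r 1)⁻¹)
  set d : Equiv.Perm (DihedralGroup n) := f⁻¹ * m * f with hddef
  have hdapp : ∀ z, d z = f⁻¹ (m (f z)) := fun z => rfl
  have hdA : d ∈ cayAut S := by
    rw [mem_cayAut]
    intro x y
    rw [hdapp x, hdapp y]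
    calc cayRel S (f⁻¹ (m (f x))) (f⁻¹ (m (f y)))
        ↔ cayRel T (f (f⁻¹ (m (f x)))) (f (f⁻¹ (m (f y)))) := (hf _ _).symm
      _ ↔ cayRel T (m (f x)) (m (f y)) := by
          rw [Equiv.Perm.inv_def, Equiv.apply_symm_apply, Equiv.apply_symm_apply]
      _ ↔ cayRel T (f x) (f y) := (mem_cayAut.mp (mulRight_mem_cayAut T ((r 1)⁻¹))) (f x) (f y)
      _ ↔ cayRel S x y := hf x y
  set A := cayAut S with hAdef
  set mA : A := ⟨m, hmA⟩ with hmAdef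
  set dA : A := ⟨d, hdA⟩ with hdAdef
  -- orders
  have hordm : orderOf m = n :=
    (orderOf_injective (rr n) rr_injective (r 1)).trans DihedralGroup.orderOf_r_one
  have hordd : orderOf d = n := by
    have h1 : d = (MulAut.conj f⁻¹) m := by
      rw [MulAut.conj_apply, inv_inv, hddef]
    rw [h1]
    exact (orderOf_injective (MulAut.conj f⁻¹).toMonoidHom
      (MulAut.conj f⁻¹).injective m).trans hordm
  have hordmA : orderOf mA = n :=
    ((orderOf_injective A.subtype A.subtype_injective mA).symm).trans hordm
  have horddA : orderOf dA = n :=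
    ((orderOf_injective A.subtype A.subtype_injective dA).symm).trans hordd
  have hCn : Nat.card (Subgroup.zpowers mA) = n := by rw [Nat.card_zpowers, hordmA]
  have hDn : Nat.card (Subgroup.zpowers dA) = n := by rw [Nat.card_zpowers, horddA]
  -- counting: |A| = 2n * st
  have hstab : Nat.card (MulAction.stabilizer A (1 : DihedralGroup n)) = st := by
    rw [hstdef]
    exact Nat.card_congr (Equiv.subtypeEquivRight (fun w => Iff.rfl))
  have horb : MulAction.orbit A (1 : DihedralGroup n) = Set.univ := by
    apply Set.eq_univ_of_forall
    intro y
    refine MulAction.mem_orbit_iff.mpr ⟨⟨rr n y⁻¹, mulRight_mem_cayAut S (y⁻¹)⁻¹⟩, ?_⟩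
    show (rr n y⁻¹) 1 = y
    rw [rr_apply]
    simp
  have hAcard : Nat.card A = 2 * n * st := by
    have h1 : Nat.card A = Nat.card (A ⧸ MulAction.stabilizer A (1 : DihedralGroup n))
        * Nat.card (MulAction.stabilizer A (1 : DihedralGroup n)) :=
      Subgroup.card_eq_card_quotient_mul_card_subgroup _
    have h2 : Nat.card (A ⧸ MulAction.stabilizer A (1 : DihedralGroup n))
        = Nat.card (MulAction.orbit A (1 : DihedralGroup n)) :=
      Nat.card_congr (MulAction.orbitEquivQuotientStabilizer A (1 : DihedralGroup n)).symm
    have h3 : Nat.card (MulAction.orbit A (1 : DihedralGroup n)) = 2 * n := by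
      rw [horb]
      rw [Nat.card_congr (Equiv.Set.univ (DihedralGroup n))]
      exact DihedralGroup.nat_card
    rw [h1, h2, h3, hstab]
  have hn0 : 0 < n := hodd.pos
  have hidxC : (Subgroup.zpowers mA).index = 2 * st := by
    have h1 := Subgroup.card_mul_index (Subgroup.zpowers mA)
    rw [hCn, hAcard] at h1
    have h2 : 2 * n * st = n * (2 * st) := by ring
    exact Nat.eq_of_mul_eq_mul_left hn0 (h1.trans h2)
  have hidxD : (Subgroup.zpowers dA).index = 2 * st := by
    have h1 := Subgroup.card_mul_index (Subgroup.zpowers dA)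
    rw [hDn, hAcard] at h1
    have h2 : 2 * n * st = n * (2 * st) := by ring
    exact Nat.eq_of_mul_eq_mul_left hn0 (h1.trans h2)
  have hcopC : Nat.Coprime (Nat.card (Subgroup.zpowers mA)) (Subgroup.zpowers mA).index := by
    rw [hCn, hidxC]
    exact Nat.Coprime.mul_right hodd.coprime_two_right hcop.symm
  have hcopD : Nat.Coprime (Nat.card (Subgroup.zpowers dA)) (Subgroup.zpowers dA).index := by
    rw [hDn, hidxD]
    exact Nat.Coprime.mul_right hodd.coprime_two_right hcop.symm
  -- conjugate the two cyclic Hall subgroups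
  obtain ⟨g, hg⟩ := hall_key (Nat.card A) A (Subgroup.zpowers dA) (Subgroup.zpowers mA)
    (by rw [hDn, hCn]) hcopD hcopC le_rfl
  have hpush : Subgroup.map (MulAut.conj (g : Equiv.Perm (DihedralGroup n))).toMonoidHom
      (Subgroup.zpowers d) = Subgroup.zpowers m := by
    have h1 := congrArg (Subgroup.map A.subtype) hg
    rw [map_map_conj_comm A.subtype g, A.subtype.map_zpowers dA, A.subtype.map_zpowers mA] at h1
    exact h1
  set h : Equiv.Perm (DihedralGroup n) := f * (g : Equiv.Perm (DihedralGroup n))⁻¹ with hhdef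
  have hinv : h⁻¹ = (g : Equiv.Perm (DihedralGroup n)) * f⁻¹ := by
    rw [hhdef, mul_inv_rev, inv_inv]
  have hCpconj : Subgroup.map (MulAut.conj h⁻¹).toMonoidHom (Subgroup.zpowers m)
      = Subgroup.zpowers m := by
    rw [hinv, ← map_conj_map_conj, MonoidHom.map_zpowers]
    have h2 : (MulAut.conj f⁻¹).toMonoidHom m = d := by
      show f⁻¹ * m * f⁻¹⁻¹ = d
      rw [inv_inv, hddef]
    rw [h2, hpush]
  have hR : Subgroup.map (MulAut.conj h⁻¹).toMonoidHom (rightReg (DihedralGroup n))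
      = rightReg (DihedralGroup n) := conj_rightReg_eq h hCpconj
  -- renormalize so that 1 is fixed
  set v : DihedralGroup n := h 1 with hvdef
  set h' : Equiv.Perm (DihedralGroup n) := rr n v * h with hh'def
  have hwmem : rr n v ∈ rightReg (DihedralGroup n) := ⟨v⁻¹, rfl⟩
  have h'inv : h'⁻¹ = h⁻¹ * (rr n v)⁻¹ := by rw [hh'def, mul_inv_rev]
  have hR' : Subgroup.map (MulAut.conj h'⁻¹).toMonoidHom (rightReg (DihedralGroup n))
      = rightReg (DihedralGroup n) := by
    rw [h'inv, ← map_conj_map_conj, map_conj_self_mem (inv_mem hwmem), hR]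
  have h'1 : h' 1 = 1 := by
    show (rr n v) (h 1) = 1
    rw [rr_apply, ← hvdef, mul_inv_cancel]
  have hh' : ∀ x y, cayRel T (h' x) (h' y) ↔ cayRel S x y := by
    intro x y
    have e1 : ∀ z, h' z = (rr n v) (h z) := fun z => rfl
    have e2 : ∀ z, h z = f ((g : Equiv.Perm (DihedralGroup n))⁻¹ z) := fun z => rfl
    rw [e1 x, e1 y]
    calc cayRel T ((rr n v) (h x)) ((rr n v) (h y))
        ↔ cayRel T (h x) (h y) :=
          (mem_cayAut.mp (mulRight_mem_cayAut T v⁻¹)) (h x) (h y)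
      _ ↔ cayRel S ((g : Equiv.Perm (DihedralGroup n))⁻¹ x)
            ((g : Equiv.Perm (DihedralGroup n))⁻¹ y) := by
          rw [e2 x, e2 y]; exact hf _ _
      _ ↔ cayRel S x y := (mem_cayAut.mp (g⁻¹ : A).2) x y
  -- h' normalizes the right regular representation, fixes 1, hence is a group automorphism
  have hmul : ∀ a b : DihedralGroup n, h'.symm (a * b) = h'.symm a * h'.symm b := by
    intro a b
    have hmem : h'⁻¹ * Equiv.mulRight b * h' ∈ rightReg (DihedralGroup n) := by
      rw [← hR']
      refine ⟨Equiv.mulRight b, ⟨b, rfl⟩, ?_⟩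
      show h'⁻¹ * Equiv.mulRight b * h'⁻¹⁻¹ = h'⁻¹ * Equiv.mulRight b * h'
      rw [inv_inv]
    obtain ⟨z, hz⟩ := mem_rightReg_iff.mp hmem
    have hz1 : z = h'.symm b := by
      have h2 := congrArg (fun w : Equiv.Perm (DihedralGroup n) => w 1) hz
      simp only [Equiv.Perm.mul_apply, Equiv.coe_mulRight, h'1, one_mul,
        Equiv.Perm.inv_def] at h2
      exact h2
    have h3 := congrArg (fun w : Equiv.Perm (DihedralGroup n) => w (h'.symm a)) hz
    simp only [Equiv.Perm.mul_apply, Equiv.coe_mulRight, Equiv.Perm.inv_def,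
      Equiv.apply_symm_apply] at h3
    rw [hz1] at h3
    exact h3.symm
  let θ : DihedralGroup n ≃* DihedralGroup n := { toEquiv := h'.symm, map_mul' := hmul }
  refine ⟨θ.symm, ?_⟩
  have hiff : ∀ s, s ∈ S ↔ h' s ∈ T := by
    intro s
    have h1 := hh' 1 s
    rw [h'1] at h1
    unfold cayRel at h1
    simpa using h1.symm
  ext t
  constructor
  · rintro ⟨s, hs, rfl⟩
    show θ.symm s ∈ T
    exact (hiff s).mp hs
  · intro ht
    refine ⟨h'.symm t, ?_, ?_⟩
    · have h1 := hiff (h'.symm t)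
      rw [Equiv.apply_symm_apply] at h1
      exact h1.mpr ht
    · show θ.symm (h'.symm t) = t
      show h' (h'.symm t) = t
      exact h'.apply_symm_apply t

end FinalAssembly
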